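/- Let d ≥ 2, α > 0, E ∈ Q(ℝ^d) with q = trace(E), let φ : ℝ^d → [0,∞) be Borel measurable, E-homogeneous, with φ(x) > 0 for all x ≠ 0, let D be an m×m real matrix, and write A := D − (q/α)I. Then for every r > 0, every k ≥ 1, all x₁,…,x_k ∈ ℝ^d and θ₁,…,θ_k ∈ ℝ^m, the following identity of Lebesgue integrals with values in [0,∞] holds: ∫_{ℝ^d} |Σ_{j=1}^k (φ(r^E x_j − y)^A − φ(−y)^A)^* θ_j|^α dy = ∫_{ℝ^d} |Σ_{j=1}^k (r^D (φ(x_j − y)^A − φ(−y)^A))^* θ_j|^α dy, where s^M := exp((ln s)M) for s > 0, Q^* denotes the transpose of a matrix Q, and the terms where φ vanishes (which occur only on a Lebesgue-null set of y) are set to 0. -/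

import Mathlib

open MeasureTheory Filter Matrix Topology Set
open scoped ENNReal NNReal

/-- `mpow r A` is `r^A := exp((ln r) A)` for `r > 0` and a real square matrix `A`. -/
noncomputable def mpow {n : ℕ} (r : ℝ) (A : Matrix (Fin n) (Fin n) ℝ) :
    Matrix (Fin n) (Fin n) ℝ :=
  NormedSpace.exp (Real.log r • A)

/-- The set of (complex) eigenvalues of a real square matrix. -/
def matSpectrum {n : ℕ} (A : Matrix (Fin n) (Fin n) ℝ) : Set ℂ :=
  spectrum ℂ (A.map (Complex.ofReal))

/-- `QSet n` is `Q(ℝⁿ)`: matrices whose eigenvalues all have positive real part. -/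
def QSet (n : ℕ) : Set (Matrix (Fin n) (Fin n) ℝ) :=
  {A | ∀ μ ∈ matSpectrum A, 0 < μ.re}

/-- `MSet n` is `M(ℝⁿ)`: matrices whose eigenvalues all have nonnegative real part and
such that every eigenvalue with zero real part is a simple root of the minimal polynomial. -/
def MSet (n : ℕ) : Set (Matrix (Fin n) (Fin n) ℝ) :=
  {A | ∀ μ ∈ matSpectrum A, 0 ≤ μ.re ∧
    (μ.re = 0 → (minpoly ℂ (A.map (Complex.ofReal))).rootMultiplicity μ = 1)}

/-- Equality of all finite-dimensional distributions of two random fields. -/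
def IdentFDD {Ω T β : Type*} [MeasurableSpace Ω] [MeasurableSpace β]
    (P : Measure Ω) (Y Z : T → Ω → β) : Prop :=
  ∀ (k : ℕ) (t : Fin k → T),
    P.map (fun ω i => Y (t i) ω) = P.map (fun ω i => Z (t i) ω)

/-- Stochastic continuity: `X s → X t` in probability whenever `s → t`. -/
def StochContinuous {Ω : Type*} [MeasurableSpace Ω] (P : Measure Ω) {d m : ℕ}
    (X : (Fin d → ℝ) → Ω → (Fin m → ℝ)) : Prop :=
  ∀ (t : Fin d → ℝ), ∀ ε > (0 : ℝ),
    Tendsto (fun s => P {ω | ε ≤ dist (X s ω) (X t ω)}) (𝓝 t) (𝓝 0)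

/-- A distribution on `ℝ^m` is full if its support is not contained in any proper
hyperplane; equivalently, it does not give full mass to any hyperplane. -/
def IsFullMeasure {m : ℕ} (μ : Measure (Fin m → ℝ)) : Prop :=
  ∀ (y : Fin m → ℝ), y ≠ 0 → ∀ c : ℝ, μ {x | ∑ i, x i * y i = c} ≠ 1

/-- A random field is proper if the distribution of `X t` is full for every `t ≠ 0`. -/
def ProperField {Ω : Type*} [MeasurableSpace Ω] (P : Measure Ω) {d m : ℕ}
    (X : (Fin d → ℝ) → Ω → (Fin m → ℝ)) : Prop :=
  ∀ t : Fin d → ℝ, t ≠ 0 → IsFullMeasure (P.map (X t))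

/-- Wide-sense operator-self-similarity with time-variable scaling exponent `E`. -/
def WOSS {Ω : Type*} [MeasurableSpace Ω] (P : Measure Ω) {d m : ℕ}
    (X : (Fin d → ℝ) → Ω → (Fin m → ℝ)) (E : Matrix (Fin d) (Fin d) ℝ) : Prop :=
  ∀ r : ℝ, 0 < r → ∃ (B : Matrix (Fin m) (Fin m) ℝ) (a : (Fin d → ℝ) → (Fin m → ℝ)),
    IdentFDD P (fun t ω => X (mpow r E *ᵥ t) ω) (fun t ω => B *ᵥ X t ω + a t)

/-- The operator norm `max_{|x|=1} |Q x|` (Euclidean norms) of a matrix. -/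
noncomputable def opNorm {n m : ℕ} (Q : Matrix (Fin m) (Fin n) ℝ) : ℝ :=
  ‖LinearMap.toContinuousLinearMap (Matrix.toEuclideanLin Q)‖

/-- The Euclidean norm of a vector in `ℝ^n`. -/
noncomputable def euclNorm {n : ℕ} (v : Fin n → ℝ) : ℝ :=
  Real.sqrt (∑ i, v i ^ 2)

/-- `G_r`: invertible matrices `A` such that `{X(r^E t)} ≡fdd {A X(t) + b(t)}`
for some deterministic function `b : ℝ^d → ℝ^m`. -/
def GSet {Ω : Type*} [MeasurableSpace Ω] (P : Measure Ω) {d m : ℕ}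
    (X : (Fin d → ℝ) → Ω → (Fin m → ℝ)) (E : Matrix (Fin d) (Fin d) ℝ)
    (r : ℝ) : Set (Matrix (Fin m) (Fin m) ℝ) :=
  {A | IsUnit A ∧ ∃ b : (Fin d → ℝ) → (Fin m → ℝ),
    IdentFDD P (fun t ω => X (mpow r E *ᵥ t) ω) (fun t ω => A *ᵥ X t ω + b t)}

/-- `G = ⋃_{r>0} G_r`. -/
def GAll {Ω : Type*} [MeasurableSpace Ω] (P : Measure Ω) {d m : ℕ}
    (X : (Fin d → ℝ) → Ω → (Fin m → ℝ)) (E : Matrix (Fin d) (Fin d) ℝ) :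
    Set (Matrix (Fin m) (Fin m) ℝ) :=
  ⋃ r ∈ Set.Ioi (0 : ℝ), GSet P X E r

/-- A radial part `τ` under the operator `E`. -/
structure IsRadialPart {d : ℕ} (E : Matrix (Fin d) (Fin d) ℝ)
    (τ : (Fin d → ℝ) → ℝ) : Prop where
  continuous : Continuous τ
  nonneg : ∀ x, 0 ≤ τ x
  pos : ∀ x : Fin d → ℝ, x ≠ 0 → 0 < τ x
  map_zero : τ 0 = 0
  even : ∀ x, τ (-x) = τ x
  scaling : ∀ r : ℝ, 0 < r → ∀ x, τ (mpow r E *ᵥ x) = r * τ x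
  isCompact_sphere : IsCompact {x | τ x = 1}
  zero_not_mem : (0 : Fin d → ℝ) ∉ {x | τ x = 1}
  tendsto_atTop : ∀ M : ℝ, ∃ R : ℝ, ∀ x : Fin d → ℝ, R ≤ ‖x‖ → M ≤ τ x
  tendsto_zero : Tendsto τ (𝓝 0) (𝓝 0)

/-- `φ` is `E`-homogeneous: `φ(r^E x) = r φ(x)` for all `r > 0` and `x ≠ 0`. -/
def EHomogeneous {d : ℕ} (E : Matrix (Fin d) (Fin d) ℝ)
    (φ : (Fin d → ℝ) → ℝ) : Prop :=
  ∀ r : ℝ, 0 < r → ∀ x : Fin d → ℝ, x ≠ 0 → φ (mpow r E *ᵥ x) = r * φ x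

/-- `ψ` is `(β,E)`-admissible with respect to the radial part `τ`. -/
def Admissible {d : ℕ} (τ : (Fin d → ℝ) → ℝ) (β : ℝ)
    (ψ : (Fin d → ℝ) → ℝ) : Prop :=
  (∀ x : Fin d → ℝ, x ≠ 0 → 0 < ψ x) ∧
  ∀ A B : ℝ, 0 < A → A < B → ∃ C : ℝ, 0 < C ∧ ∀ y : Fin d → ℝ,
    A ≤ euclNorm y → euclNorm y ≤ B → ∀ x : Fin d → ℝ, τ x ≤ 1 →
      |ψ (x + y) - ψ y| ≤ C * τ x ^ β

section AuxLemmas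
open NormedSpace


lemma myDetDiff (m : ℕ) :
    letI : NormedRing (Matrix (Fin m) (Fin m) ℝ) := Matrix.linftyOpNormedRing
    letI : NormedAlgebra ℝ (Matrix (Fin m) (Fin m) ℝ) := Matrix.linftyOpNormedAlgebra
    Differentiable ℝ (fun A : Matrix (Fin m) (Fin m) ℝ => A.det) := by
  letI : NormedRing (Matrix (Fin m) (Fin m) ℝ) := Matrix.linftyOpNormedRing
  letI : NormedAlgebra ℝ (Matrix (Fin m) (Fin m) ℝ) := Matrix.linftyOpNormedAlgebra
  have entry : ∀ i j : Fin m, Differentiable ℝ (fun A : Matrix (Fin m) (Fin m) ℝ => A i j) := by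
    intro i j
    let ℓ : Matrix (Fin m) (Fin m) ℝ →ₗ[ℝ] ℝ :=
      (LinearMap.proj j).comp (LinearMap.proj (R := ℝ) (φ := fun _ : Fin m => Fin m → ℝ) i)
    exact (LinearMap.toContinuousLinearMap ℓ).differentiable
  simp only [Matrix.det_apply']
  apply Differentiable.fun_sum
  intro σ _
  have hp : Differentiable ℝ (fun A : Matrix (Fin m) (Fin m) ℝ => ∏ i, A (σ i) i) := by
    intro A
    exact (HasFDerivAt.finset_prod
      (fun i _ => ((entry (σ i) i) A).hasFDerivAt)).differentiableAt
  exact hp.const_mul _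

lemma myDetExp {m : ℕ} (M : Matrix (Fin m) (Fin m) ℝ) :
    (NormedSpace.exp M).det = Real.exp M.trace := by
  letI : NormedRing (Matrix (Fin m) (Fin m) ℝ) := Matrix.linftyOpNormedRing
  letI : NormedAlgebra ℝ (Matrix (Fin m) (Fin m) ℝ) := Matrix.linftyOpNormedAlgebra
  have hdet : Differentiable ℝ (fun A : Matrix (Fin m) (Fin m) ℝ => A.det) := myDetDiff m
  set L := fderiv ℝ (fun A : Matrix (Fin m) (Fin m) ℝ => A.det) 1 with hLdef
  have hdet1 : HasFDerivAt (fun A : Matrix (Fin m) (Fin m) ℝ => A.det) L 1 :=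
    (hdet 1).hasFDerivAt
  -- L N = trace N
  have hLtrace : ∀ N : Matrix (Fin m) (Fin m) ℝ, L N = N.trace := by
    intro N
    have hc : HasDerivAt (fun t : ℝ => (1 : Matrix (Fin m) (Fin m) ℝ) + t • N) N 0 := by
      have h := ((hasDerivAt_id (0 : ℝ)).smul_const N).const_add
        (1 : Matrix (Fin m) (Fin m) ℝ)
      simp only [id_eq, id, one_smul] at h
      exact h
    have hdet1' : HasFDerivAt (fun A : Matrix (Fin m) (Fin m) ℝ => A.det) L
        ((1 : Matrix (Fin m) (Fin m) ℝ) + (0 : ℝ) • N) := by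
      simpa using hdet1
    have h1 : HasDerivAt (fun t : ℝ => ((1 : Matrix (Fin m) (Fin m) ℝ) + t • N).det) (L N) 0 :=
      hdet1'.comp_hasDerivAt 0 hc
    set Q := ((1 + (Polynomial.X : Polynomial ℝ) • N.map Polynomial.C).det).divX.divX with hQ
    have h2 : HasDerivAt (fun t : ℝ => ((1 : Matrix (Fin m) (Fin m) ℝ) + t • N).det)
        N.trace 0 := by
      have heq : (fun t : ℝ => ((1 : Matrix (Fin m) (Fin m) ℝ) + t • N).det)
          = fun t : ℝ => 1 + N.trace * t + Q.eval t * t ^ 2 := by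
        funext t; exact Matrix.det_one_add_smul t N
      rw [heq]
      have h3 : HasDerivAt (fun t : ℝ => 1 + N.trace * t + Q.eval t * t ^ 2)
          (0 + N.trace * 1 + (Q.derivative.eval 0 * 0 ^ 2 + Q.eval 0 * (2 * 0 ^ 1))) 0 := by
        exact (((hasDerivAt_const (0:ℝ) (1:ℝ)).add
          ((hasDerivAt_id (0:ℝ)).const_mul N.trace)).add
          ((Q.hasDerivAt 0).mul (hasDerivAt_pow 2 0)))
      simpa using h3
    exact h1.unique h2
  set g : ℝ → ℝ := fun t => (NormedSpace.exp (t • M)).det with hgdef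
  have hg0 : HasDerivAt g M.trace 0 := by
    have he : HasDerivAt (fun t : ℝ => NormedSpace.exp (t • M)) M 0 := by
      have h := hasDerivAt_exp_smul_const (𝕂 := ℝ) M 0
      rw [zero_smul, NormedSpace.exp_zero, one_mul] at h
      exact h
    have hdet1' : HasFDerivAt (fun A : Matrix (Fin m) (Fin m) ℝ => A.det) L
        (NormedSpace.exp ((0 : ℝ) • M)) := by
      simpa [NormedSpace.exp_zero] using hdet1
    have h := hdet1'.comp_hasDerivAt 0 he
    exact h.congr_deriv (hLtrace M)
  have hmul : ∀ s t : ℝ, g (s + t) = g s * g t := by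
    intro s t
    have : NormedSpace.exp ((s + t) • M)
        = NormedSpace.exp (s • M) * NormedSpace.exp (t • M) := by
      rw [add_smul]
      exact Matrix.exp_add_of_commute _ _ (((Commute.refl M).smul_left s).smul_right t)
    simp only [hgdef, this, Matrix.det_mul]
  have hgt : ∀ t : ℝ, HasDerivAt g (M.trace * g t) t := by
    intro t
    have hinner : HasDerivAt (fun s : ℝ => s - t) 1 t := by
      simpa using (hasDerivAt_id t).sub_const t
    have hcomp0 : HasDerivAt (fun s : ℝ => g (s - t)) (M.trace * 1) t := by
      refine HasDerivAt.comp (h₂ := g) (h₂' := M.trace) t ?_ hinner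
      simpa using hg0
    have hcomp : HasDerivAt (fun s : ℝ => g t * g (s - t)) (g t * (M.trace * 1)) t :=
      hcomp0.const_mul (g t)
    have hfun : (fun s : ℝ => g t * g (s - t)) = g := by
      funext s
      rw [← hmul t (s - t)]
      congr 1; ring
    rw [hfun] at hcomp
    simpa [mul_comm] using hcomp
  have hF : ∀ t : ℝ, HasDerivAt (fun t : ℝ => g t * Real.exp (-M.trace * t)) 0 t := by
    intro t
    have hexp : HasDerivAt (fun t : ℝ => Real.exp (-M.trace * t))
        (Real.exp (-M.trace * t) * -M.trace) t := by
      have h := ((hasDerivAt_id t).const_mul (-M.trace)).exp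
      simpa using h
    have := (hgt t).mul hexp
    refine HasDerivAt.congr_deriv this ?_
    ring
  have hconst : g 1 * Real.exp (-M.trace * 1) = g 0 * Real.exp (-M.trace * 0) :=
    is_const_of_deriv_eq_zero (fun t => (hF t).differentiableAt)
      (fun t => (hF t).deriv) 1 0
  have hg1 : g 1 = (NormedSpace.exp M).det := by simp [hgdef]
  have hg00 : g 0 = 1 := by simp [hgdef, NormedSpace.exp_zero]
  rw [hg1, hg00] at hconst
  simp only [mul_zero, Real.exp_zero, mul_one] at hconst
  have := congrArg (fun x => x * Real.exp (M.trace * 1)) hconst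
  simpa [← Real.exp_add, mul_assoc] using this

lemma myExpSmulOne {m : ℕ} (c : ℝ) :
    NormedSpace.exp (c • (1 : Matrix (Fin m) (Fin m) ℝ)) = Real.exp c • 1 := by
  letI : NormedRing (Matrix (Fin m) (Fin m) ℝ) := Matrix.linftyOpNormedRing
  letI : NormedAlgebra ℝ (Matrix (Fin m) (Fin m) ℝ) := Matrix.linftyOpNormedAlgebra
  rw [← Algebra.algebraMap_eq_smul_one]
  have h := NormedSpace.algebraMap_exp_comm (𝔸 := Matrix (Fin m) (Fin m) ℝ) c
  rw [← Real.exp_eq_exp_ℝ, Algebra.algebraMap_eq_smul_one] at h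
  exact h.symm

lemma mpow_mul_pos {n : ℕ} (A : Matrix (Fin n) (Fin n) ℝ) {r s : ℝ}
    (hr : 0 < r) (hs : 0 < s) :
    mpow (r * s) A = mpow r A * mpow s A := by
  unfold mpow
  rw [Real.log_mul hr.ne' hs.ne', add_smul]
  exact Matrix.exp_add_of_commute _ _ (((Commute.refl A).smul_left _).smul_right _)

lemma mpow_one_left {n : ℕ} (A : Matrix (Fin n) (Fin n) ℝ) : mpow 1 A = 1 := by
  simp [mpow, Real.log_one, NormedSpace.exp_zero]

lemma mpow_det {n : ℕ} (E : Matrix (Fin n) (Fin n) ℝ) (r : ℝ) :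
    (mpow r E).det = Real.exp (Real.log r * E.trace) := by
  unfold mpow
  rw [myDetExp, Matrix.trace_smul, smul_eq_mul]

lemma mpow_sub_smul_one {n : ℕ} (D : Matrix (Fin n) (Fin n) ℝ) (c r : ℝ) :
    mpow r (D - c • 1) = Real.exp (-(c * Real.log r)) • mpow r D := by
  unfold mpow
  have h : Real.log r • (D - c • (1 : Matrix (Fin n) (Fin n) ℝ))
      = (-(c * Real.log r)) • (1 : Matrix (Fin n) (Fin n) ℝ) + Real.log r • D := by
    rw [smul_sub, smul_smul, sub_eq_add_neg, add_comm, ← neg_smul]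
    ring_nf
  rw [h, Matrix.exp_add_of_commute _ _
    (((Commute.one_left D).smul_left _).smul_right _), myExpSmulOne,
    smul_mul_assoc, one_mul]

lemma mpow_inv_mul {n : ℕ} (E : Matrix (Fin n) (Fin n) ℝ) {r : ℝ} (hr : 0 < r) :
    mpow r E * mpow r⁻¹ E = 1 ∧ mpow r⁻¹ E * mpow r E = 1 := by
  constructor
  · rw [← mpow_mul_pos E hr (inv_pos.mpr hr), mul_inv_cancel₀ hr.ne', mpow_one_left]
  · rw [← mpow_mul_pos E (inv_pos.mpr hr) hr, inv_mul_cancel₀ hr.ne', mpow_one_left]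

lemma lintegral_comp_mpow {d : ℕ} (E : Matrix (Fin d) (Fin d) ℝ) {r : ℝ} (hr : 0 < r)
    (F : (Fin d → ℝ) → ℝ≥0∞) :
    ∫⁻ y : Fin d → ℝ, F y
      = ENNReal.ofReal (Real.exp (Real.log r * E.trace))
        * ∫⁻ z : Fin d → ℝ, F (mpow r E *ᵥ z) := by
  obtain ⟨h1, h2⟩ := mpow_inv_mul E hr
  set f : (Fin d → ℝ) →ₗ[ℝ] (Fin d → ℝ) := Matrix.toLin' (mpow r E) with hf
  have hdet : LinearMap.det f = Real.exp (Real.log r * E.trace) := by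
    rw [hf, LinearMap.det_toLin', mpow_det]
  have hdetpos : 0 < LinearMap.det f := hdet ▸ Real.exp_pos _
  -- linear equiv
  let e : (Fin d → ℝ) ≃ₗ[ℝ] (Fin d → ℝ) :=
    LinearEquiv.ofLinear (Matrix.toLin' (mpow r E)) (Matrix.toLin' (mpow r⁻¹ E))
      (by rw [← Matrix.toLin'_mul, h1, Matrix.toLin'_one])
      (by rw [← Matrix.toLin'_mul, h2, Matrix.toLin'_one])
  let eM : (Fin d → ℝ) ≃ᵐ (Fin d → ℝ) :=
    e.toContinuousLinearEquiv.toHomeomorph.toMeasurableEquiv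
  have hcoe : (eM : (Fin d → ℝ) → (Fin d → ℝ)) = fun z => mpow r E *ᵥ z := by
    funext z
    simp [eM, e, Matrix.toLin'_apply]
  have hmap : Measure.map (⇑eM) volume
      = ENNReal.ofReal |(LinearMap.det f)⁻¹| • volume := by
    rw [hcoe]
    have : (fun z : Fin d → ℝ => mpow r E *ᵥ z) = ⇑f := by
      funext z; simp [hf, Matrix.toLin'_apply]
    rw [this]
    exact Real.map_linearMap_volume_pi_eq_smul_volume_pi hdetpos.ne'
  have key : ∫⁻ z : Fin d → ℝ, F (mpow r E *ᵥ z)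
      = ENNReal.ofReal (LinearMap.det f)⁻¹ * ∫⁻ y, F y := by
    have h3 : ∫⁻ z : Fin d → ℝ, F (eM z) = ∫⁻ y, F y ∂(Measure.map (⇑eM) volume) :=
      (MeasureTheory.lintegral_map_equiv F eM).symm
    rw [hcoe] at h3 hmap
    rw [h3, hmap, lintegral_smul_measure, smul_eq_mul, abs_of_pos (inv_pos.mpr hdetpos)]
  rw [key, ← mul_assoc, ← hdet, ← ENNReal.ofReal_mul hdetpos.le,
    mul_inv_cancel₀ hdetpos.ne', ENNReal.ofReal_one, one_mul]

lemma euclNorm_nonneg {n : ℕ} (v : Fin n → ℝ) : 0 ≤ euclNorm v := Real.sqrt_nonneg _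

lemma euclNorm_smul {n : ℕ} {c : ℝ} (hc : 0 ≤ c) (v : Fin n → ℝ) :
    euclNorm (c • v) = c * euclNorm v := by
  unfold euclNorm
  have h : ∀ i, (c • v) i ^ 2 = c ^ 2 * v i ^ 2 := by
    intro i; simp [Pi.smul_apply, smul_eq_mul, mul_pow]
  simp_rw [h]
  rw [← Finset.mul_sum, Real.sqrt_mul (sq_nonneg c), Real.sqrt_sq hc]


end AuxLemmas

/-- **Theorem 2.5, step (iii).** The change-of-variables identity showing
operator-self-similarity of the moving-average field: with `A = D - (q/α)I`, the stable
integrals of the scaled integrands coincide. -/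
theorem movingAverage_scaling_identity {d m : ℕ} (hd : 2 ≤ d)
    (α : ℝ) (hα : 0 < α)
    (E : Matrix (Fin d) (Fin d) ℝ) (hE : E ∈ QSet d)
    (φ : (Fin d → ℝ) → ℝ) (hφm : Measurable φ) (hφnn : ∀ x, 0 ≤ φ x)
    (hφh : EHomogeneous E φ) (hφpos : ∀ x : Fin d → ℝ, x ≠ 0 → 0 < φ x)
    (D A : Matrix (Fin m) (Fin m) ℝ)
    (hA : A = D - (Matrix.trace E / α) • 1) :
    ∀ r : ℝ, 0 < r → ∀ k : ℕ, 1 ≤ k →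
      ∀ (x : Fin k → (Fin d → ℝ)) (θ : Fin k → (Fin m → ℝ)),
      (∫⁻ y : Fin d → ℝ, ENNReal.ofReal
        (euclNorm (∑ j : Fin k,
          if φ (mpow r E *ᵥ x j - y) = 0 ∨ φ (-y) = 0 then 0
          else (mpow (φ (mpow r E *ᵥ x j - y)) A - mpow (φ (-y)) A)ᵀ *ᵥ θ j) ^ α))
      = ∫⁻ y : Fin d → ℝ, ENNReal.ofReal
        (euclNorm (∑ j : Fin k,
          if φ (x j - y) = 0 ∨ φ (-y) = 0 then 0
          else (mpow r D * (mpow (φ (x j - y)) A - mpow (φ (-y)) A))ᵀ *ᵥ θ j) ^ α) := by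
  intro r hr k _ x θ
  set q := Matrix.trace E with hq
  set c := Real.exp (-(q / α * Real.log r)) with hc
  have hcpos : (0 : ℝ) < c := Real.exp_pos _
  have hmA : ∀ s : ℝ, 0 < s → mpow (r * s) A = c • (mpow r D * mpow s A) := by
    intro s hs
    rw [mpow_mul_pos A hr hs, hA, mpow_sub_smul_one, smul_mul_assoc]
  have hcα : c ^ α = Real.exp (-(q * Real.log r)) := by
    rw [hc, ← Real.exp_mul]
    congr 1
    field_simp
  have hsing : ∀ a : Fin d → ℝ, volume ({a} : Set (Fin d → ℝ)) = 0 := by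
    intro a
    have h1 : ({a} : Set (Fin d → ℝ)) = Set.pi Set.univ (fun i => {a i}) := by
      ext y; simp [Set.mem_pi, funext_iff]
    rw [h1, volume_pi_pi]
    exact Finset.prod_eq_zero (Finset.mem_univ (⟨0, by omega⟩ : Fin d))
      Real.volume_singleton
  have hae : ∀ᵐ z : Fin d → ℝ, z ≠ 0 ∧ ∀ j, x j ≠ z := by
    rw [MeasureTheory.ae_iff]
    refine measure_mono_null (fun z hz => ?_)
      (show volume (({0} : Set (Fin d → ℝ)) ∪ ⋃ j, {x j}) = 0 from
        measure_union_null (hsing 0) (measure_iUnion_null fun j => hsing (x j)))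
    simp only [mem_setOf_eq] at hz
    push_neg at hz
    by_cases h0 : z = 0
    · exact Set.mem_union_left _ (by simp [h0])
    · obtain ⟨j, hj⟩ := hz h0
      exact Set.mem_union_right _ (Set.mem_iUnion.mpr ⟨j, by simp [hj]⟩)
  have key : (fun z : Fin d → ℝ => ENNReal.ofReal
        (euclNorm (∑ j : Fin k,
          if φ (mpow r E *ᵥ x j - mpow r E *ᵥ z) = 0 ∨ φ (-(mpow r E *ᵥ z)) = 0 then 0
          else (mpow (φ (mpow r E *ᵥ x j - mpow r E *ᵥ z)) A
            - mpow (φ (-(mpow r E *ᵥ z))) A)ᵀ *ᵥ θ j) ^ α))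
      =ᵐ[volume] (fun z : Fin d → ℝ =>
        ENNReal.ofReal (Real.exp (-(q * Real.log r))) * ENNReal.ofReal
        (euclNorm (∑ j : Fin k,
          if φ (x j - z) = 0 ∨ φ (-z) = 0 then 0
          else (mpow r D * (mpow (φ (x j - z)) A - mpow (φ (-z)) A))ᵀ *ᵥ θ j) ^ α)) := by
    filter_upwards [hae] with z hz
    obtain ⟨hz0, hzx⟩ := hz
    have hsum : (∑ j : Fin k,
          if φ (mpow r E *ᵥ x j - mpow r E *ᵥ z) = 0 ∨ φ (-(mpow r E *ᵥ z)) = 0 then 0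
          else (mpow (φ (mpow r E *ᵥ x j - mpow r E *ᵥ z)) A
            - mpow (φ (-(mpow r E *ᵥ z))) A)ᵀ *ᵥ θ j)
        = c • ∑ j : Fin k,
          if φ (x j - z) = 0 ∨ φ (-z) = 0 then 0
          else (mpow r D * (mpow (φ (x j - z)) A - mpow (φ (-z)) A))ᵀ *ᵥ θ j := by
      rw [Finset.smul_sum]
      refine Finset.sum_congr rfl fun j _ => ?_
      have hxz : x j - z ≠ 0 := sub_ne_zero.mpr (hzx j)
      have hnz : -z ≠ (0 : Fin d → ℝ) := neg_ne_zero.mpr hz0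
      have e1 : mpow r E *ᵥ x j - mpow r E *ᵥ z = mpow r E *ᵥ (x j - z) :=
        (Matrix.mulVec_sub _ _ _).symm
      have e2 : -(mpow r E *ᵥ z) = mpow r E *ᵥ (-z) := (Matrix.mulVec_neg _ _).symm
      rw [e1, e2, hφh r hr _ hxz, hφh r hr _ hnz]
      have hL : ¬(r * φ (x j - z) = 0 ∨ r * φ (-z) = 0) := by
        push_neg
        exact ⟨(mul_pos hr (hφpos _ hxz)).ne', (mul_pos hr (hφpos _ hnz)).ne'⟩
      have hR : ¬(φ (x j - z) = 0 ∨ φ (-z) = 0) := by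
        push_neg
        exact ⟨(hφpos _ hxz).ne', (hφpos _ hnz).ne'⟩
      rw [if_neg hL, if_neg hR, hmA _ (hφpos _ hxz), hmA _ (hφpos _ hnz),
        ← smul_sub, ← mul_sub, Matrix.transpose_smul, Matrix.smul_mulVec]
    rw [hsum, euclNorm_smul hcpos.le, Real.mul_rpow hcpos.le (euclNorm_nonneg _),
      hcα, ENNReal.ofReal_mul (Real.exp_nonneg _)]
  calc
    (∫⁻ y : Fin d → ℝ, ENNReal.ofReal
        (euclNorm (∑ j : Fin k,
          if φ (mpow r E *ᵥ x j - y) = 0 ∨ φ (-y) = 0 then 0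
          else (mpow (φ (mpow r E *ᵥ x j - y)) A - mpow (φ (-y)) A)ᵀ *ᵥ θ j) ^ α))
        = ENNReal.ofReal (Real.exp (Real.log r * q))
          * ∫⁻ z : Fin d → ℝ, ENNReal.ofReal
        (euclNorm (∑ j : Fin k,
          if φ (mpow r E *ᵥ x j - mpow r E *ᵥ z) = 0 ∨ φ (-(mpow r E *ᵥ z)) = 0 then 0
          else (mpow (φ (mpow r E *ᵥ x j - mpow r E *ᵥ z)) A
            - mpow (φ (-(mpow r E *ᵥ z))) A)ᵀ *ᵥ θ j) ^ α) :=
      lintegral_comp_mpow E hr _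
    _ = ENNReal.ofReal (Real.exp (Real.log r * q))
          * (ENNReal.ofReal (Real.exp (-(q * Real.log r)))
            * ∫⁻ z : Fin d → ℝ, ENNReal.ofReal
        (euclNorm (∑ j : Fin k,
          if φ (x j - z) = 0 ∨ φ (-z) = 0 then 0
          else (mpow r D * (mpow (φ (x j - z)) A - mpow (φ (-z)) A))ᵀ *ᵥ θ j) ^ α)) := by
      refine congrArg (ENNReal.ofReal (Real.exp (Real.log r * q)) * ·) ?_
      rw [lintegral_congr_ae key]
      exact lintegral_const_mul' _ _ ENNReal.ofReal_ne_top
    _ = ∫⁻ y : Fin d → ℝ, ENNReal.ofReal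
        (euclNorm (∑ j : Fin k,
          if φ (x j - y) = 0 ∨ φ (-y) = 0 then 0
          else (mpow r D * (mpow (φ (x j - y)) A - mpow (φ (-y)) A))ᵀ *ᵥ θ j) ^ α) := by
      rw [← mul_assoc, ← ENNReal.ofReal_mul (Real.exp_nonneg _), ← Real.exp_add,
        show Real.log r * q + -(q * Real.log r) = 0 by ring,
        Real.exp_zero, ENNReal.ofReal_one, one_mul]
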